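/- Let L ≥ 1, let Ω ⊆ ℝ^L be a nonempty open connected set, and let f : ℝ^L → ℝ be real-analytic on a neighborhood of every point of Ω. If the set {ω ∈ Ω : f(ω) = 0} has positive Lebesgue measure, then f(ω) = 0 for every ω ∈ Ω. -/

import Mathlib

open MeasureTheory

open Metric Filter
open scoped Topology ENNReal

lemma cone_of_not_eventually_zero {E : Type*} [NormedAddCommGroup E] [NormedSpace ℝ E]
    [Nontrivial E] {f : E → ℝ} {x₀ : E} (hf : AnalyticAt ℝ f x₀)
    (h : ¬ ∀ᶠ x in 𝓝 x₀, f x = 0) :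
    ∃ y₀ : E, ‖y₀‖ = 1 ∧ ∃ δ : ℝ, 0 < δ ∧ δ < 1 ∧
      ∀ᶠ r in 𝓝[>] (0 : ℝ), ∀ y ∈ ball y₀ δ, f (x₀ + r • y) ≠ 0 := by
  classical
  obtain ⟨p, hp⟩ := hf
  by_cases hdiag : ∃ n : ℕ, ∃ y : E, p n (fun _ => y) ≠ 0
  swap
  · exfalso
    push_neg at hdiag
    apply h
    obtain ⟨r, hpr⟩ := hp
    filter_upwards [EMetric.ball_mem_nhds x₀ hpr.r_pos] with x hx
    have hx' : x - x₀ ∈ Metric.eball (0 : E) r := by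
      simpa [Metric.mem_eball, edist_eq_enorm_sub, edist_zero_right] using hx
    have hsum := hpr.sum hx'
    rw [add_sub_cancel] at hsum
    rw [hsum]
    unfold FormalMultilinearSeries.sum
    simp [hdiag]
  · set g : ℕ → E → ℝ := fun n y => p n (fun _ => y) with hgdef
    set k := Nat.find hdiag with hkdef
    have hkmin : ∀ n < k, ∀ y, g n y = 0 := fun n hn y => by
      by_contra hy; exact Nat.find_min hdiag hn ⟨y, hy⟩
    -- get a nonzero witness which is itself nonzero
    obtain ⟨y₁, hy₁, hy₁0⟩ : ∃ y, g k y ≠ 0 ∧ y ≠ 0 := by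
      obtain ⟨y, hy⟩ := Nat.find_spec hdiag
      rcases Nat.eq_zero_or_pos k with hk0 | hkpos
      · obtain ⟨z, hz⟩ := exists_ne (0 : E)
        refine ⟨z, ?_, hz⟩
        haveI : IsEmpty (Fin k) := by rw [hk0]; infer_instance
        have he : (fun _ : Fin k => z) = fun _ : Fin k => y := funext fun i => isEmptyElim i
        simpa [g, he] using hy
      · refine ⟨y, hy, ?_⟩
        rintro rfl
        exact hy ((p k).map_coord_zero (⟨0, hkpos⟩ : Fin k) rfl)
    have hscale : ∀ (t : ℝ) (y : E), g k (t • y) = t ^ k * g k y := by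
      intro t y
      have := (p k).map_smul_univ (fun _ : Fin k => t) (fun _ : Fin k => y)
      simpa [g, Finset.prod_const, smul_eq_mul] using this
    set y₀ : E := ‖y₁‖⁻¹ • y₁ with hy₀def
    have hy₀norm : ‖y₀‖ = 1 := norm_smul_inv_norm hy₁0
    have hc : g k y₀ ≠ 0 := by
      rw [hy₀def, hscale]
      exact mul_ne_zero (pow_ne_zero _ (inv_ne_zero (norm_ne_zero_iff.2 hy₁0))) hy₁
    set c : ℝ := |g k y₀| with hcdef
    have hc0 : 0 < c := abs_pos.2 hc
    have hcont : Continuous (g k) :=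
      (p k).cont.comp (continuous_pi fun _ => continuous_id)
    have hopen : IsOpen {y : E | c / 2 < |g k y|} :=
      isOpen_lt continuous_const hcont.abs
    have hy₀mem : y₀ ∈ {y : E | c / 2 < |g k y|} := by
      simp only [Set.mem_setOf_eq, ← hcdef]; linarith
    obtain ⟨δ', hδ'0, hδ'ball⟩ := Metric.isOpen_iff.1 hopen y₀ hy₀mem
    set δ : ℝ := min δ' (1 / 2) with hδdef
    have hδ0 : 0 < δ := lt_min hδ'0 (by norm_num)
    have hδ1 : δ < 1 := lt_of_le_of_lt (min_le_right _ _) (by norm_num)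
    have hV : ∀ y ∈ ball y₀ δ, c / 2 < |g k y| := fun y hy =>
      hδ'ball (ball_subset_ball (min_le_left _ _) hy)
    -- Taylor estimate
    have hps : ∀ y : E, p.partialSum (k + 1) y = g k y := by
      intro y
      rw [FormalMultilinearSeries.partialSum]
      rw [Finset.sum_eq_single k]
      · intro b hb hbk
        exact hkmin b (lt_of_le_of_ne (Nat.lt_succ_iff.1 (Finset.mem_range.1 hb)) hbk) y
      · intro hk; exact absurd (Finset.self_mem_range_succ k) hk
    have hbigO := hp.isBigO_sub_partialSum_pow (k + 1)
    obtain ⟨C, hC0, hC⟩ := hbigO.exists_pos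
    rw [Asymptotics.isBigOWith_iff] at hC
    obtain ⟨ε, hε0, hball2⟩ := Metric.eventually_nhds_iff_ball.mp hC
    set r₁ : ℝ := min (ε / 2) (c / (2 * (C * 2 ^ (k + 1)))) with hr₁def
    have hr₁0 : 0 < r₁ := lt_min (by linarith) (by positivity)
    refine ⟨y₀, hy₀norm, δ, hδ0, hδ1, ?_⟩
    filter_upwards [Ioo_mem_nhdsGT_of_mem ⟨le_refl (0:ℝ), hr₁0⟩] with r hr y hy hf0
    obtain ⟨hr0, hrr₁⟩ := hr
    have hy2 : ‖y‖ < 2 := by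
      have : ‖y - y₀‖ < δ := by rwa [mem_ball, dist_eq_norm] at hy
      calc ‖y‖ = ‖y₀ + (y - y₀)‖ := congrArg norm (by abel)
      _ ≤ ‖y₀‖ + ‖y - y₀‖ := norm_add_le _ _
      _ < 1 + 1 := by rw [hy₀norm]; linarith
      _ = 2 := by norm_num
    have hry : ‖r • y‖ < ε := by
      rw [norm_smul, Real.norm_eq_abs, abs_of_pos hr0]
      have h1 : r < ε / 2 := lt_of_lt_of_le hrr₁ (min_le_left _ _)
      nlinarith
    have hbound := hball2 (r • y) (mem_ball_zero_iff.2 hry)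
    rw [hps] at hbound
    rw [hf0] at hbound
    have hgr : |g k (r • y)| = r ^ k * |g k y| := by
      rw [hscale, abs_mul, abs_pow, abs_of_pos hr0]
    have hlow : r ^ k * (c / 2) < |g k (r • y)| := by
      rw [hgr]
      exact mul_lt_mul_of_pos_left (hV y hy) (pow_pos hr0 k)
    have hup : |g k (r • y)| ≤ C * 2 ^ (k + 1) * r ^ (k + 1) := by
      have h1 : ‖(0:ℝ) - g k (r • y)‖ = |g k (r • y)| := by
        rw [zero_sub, norm_neg, Real.norm_eq_abs]
      rw [h1] at hbound
      calc |g k (r • y)| ≤ C * ‖‖r • y‖ ^ (k + 1)‖ := hbound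
      _ = C * ‖r • y‖ ^ (k + 1) := by rw [Real.norm_eq_abs, abs_of_nonneg (by positivity)]
      _ ≤ C * (2 * r) ^ (k + 1) := by
          apply mul_le_mul_of_nonneg_left _ hC0.le
          apply pow_le_pow_left₀ (norm_nonneg _)
          rw [norm_smul, Real.norm_eq_abs, abs_of_pos hr0]
          nlinarith
      _ = C * 2 ^ (k + 1) * r ^ (k + 1) := by rw [mul_pow]; ring
    have hrsmall : r < c / (2 * (C * 2 ^ (k + 1))) := lt_of_lt_of_le hrr₁ (min_le_right _ _)
    have : C * 2 ^ (k + 1) * r ^ (k + 1) < r ^ k * (c / 2) := by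
      have h2 : r * (C * 2 ^ (k + 1)) < c / 2 := by
        rw [lt_div_iff₀ (by positivity)] at hrsmall
        nlinarith
      calc C * 2 ^ (k + 1) * r ^ (k + 1) = r ^ k * (r * (C * 2 ^ (k + 1))) := by ring
      _ < r ^ k * (c / 2) := mul_lt_mul_of_pos_left h2 (pow_pos hr0 k)
    linarith [hlow, hup]
/-- If a function that is real-analytic on a neighborhood of every point of a nonempty open
connected set `Ω ⊆ ℝ^L` vanishes on a subset of `Ω` of positive Lebesgue measure, then it
vanishes identically on `Ω`. -/
theorem analyticOnNhd_eq_zero_of_pos_measure_zero_set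
    (L : ℕ) (hL : 1 ≤ L)
    (Ω : Set (EuclideanSpace ℝ (Fin L)))
    (hne : Ω.Nonempty) (hopen : IsOpen Ω) (hconn : IsConnected Ω)
    (f : EuclideanSpace ℝ (Fin L) → ℝ)
    (hf : AnalyticOnNhd ℝ f Ω)
    (hpos : 0 < volume {ω ∈ Ω | f ω = 0}) :
    ∀ ω ∈ Ω, f ω = 0 := by
  classical
  haveI : Nonempty (Fin L) := ⟨⟨0, hL⟩⟩
  haveI : Nontrivial (EuclideanSpace ℝ (Fin L)) := by
    refine ⟨0, EuclideanSpace.single ⟨0, hL⟩ (1 : ℝ), fun h => ?_⟩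
    have := congrArg (fun v => v ⟨0, hL⟩) h
    simp [EuclideanSpace.single_apply] at this
  set Z := {ω ∈ Ω | f ω = 0} with hZdef
  have hZmeas : MeasurableSet Z := by
    have hZeq : Z = Ω ∩ closure Z := by
      apply Set.Subset.antisymm
      · exact fun x hx => ⟨hx.1, subset_closure hx⟩
      · rintro x ⟨hxΩ, hxc⟩
        refine ⟨hxΩ, ?_⟩
        have hcont : ContinuousAt f x := (hf x hxΩ).continuousAt
        haveI hne' : (𝓝[Z] x).NeBot := mem_closure_iff_nhdsWithin_neBot.1 hxc
        have h1 : Tendsto f (𝓝[Z] x) (𝓝 (f x)) := hcont.continuousWithinAt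
        have h2 : Tendsto f (𝓝[Z] x) (𝓝 0) := by
          apply Tendsto.congr' _ tendsto_const_nhds
          filter_upwards [self_mem_nhdsWithin] with z hz using (hz.2).symm
        exact tendsto_nhds_unique h1 h2
    rw [hZeq]
    exact hopen.measurableSet.inter isClosed_closure.measurableSet
  have hres : volume.restrict Z ≠ 0 := by
    intro h0
    have : volume Z = 0 := by
      rw [← Measure.restrict_apply_univ Z, h0]; simp
    exact absurd this hpos.ne'
  haveI : (ae (volume.restrict Z)).NeBot := ae_neBot.mpr hres
  obtain ⟨x₀, hx₀t, hx₀Z⟩ :=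
    ((Besicovitch.ae_tendsto_measure_inter_div volume Z).and
      (ae_restrict_mem hZmeas)).exists
  have hx₀Ω : x₀ ∈ Ω := hx₀Z.1
  suffices hev : ∀ᶠ x in 𝓝 x₀, f x = 0 by
    exact fun ω hω =>
      hf.eqOn_zero_of_preconnected_of_eventuallyEq_zero hconn.isPreconnected hx₀Ω hev hω
  by_contra hev
  obtain ⟨y₀, hy₀norm, δ, hδ0, hδ1, hcone⟩ :=
    cone_of_not_eventually_zero (hf x₀ hx₀Ω) hev
  have h1δ : (0:ℝ) < 1 + δ := by linarith
  set ρ : ℝ≥0∞ := ENNReal.ofReal ((δ / (1 + δ)) ^ L) with hρdef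
  have hρ0 : ρ ≠ 0 := by
    rw [hρdef, Ne, ENNReal.ofReal_eq_zero, not_le]
    positivity
  have h1ρ : (1 : ℝ≥0∞) - ρ < 1 :=
    ENNReal.sub_lt_self ENNReal.one_ne_top one_ne_zero hρ0
  have hev2 : ∀ᶠ R in 𝓝[>] (0:ℝ),
      1 - ρ < volume (Z ∩ Metric.closedBall x₀ R) / volume (Metric.closedBall x₀ R) :=
    hx₀t.eventually_const_lt h1ρ
  have hmap : Tendsto (fun r : ℝ => r * (1 + δ)) (𝓝[>] 0) (𝓝[>] 0) := by
    apply tendsto_nhdsWithin_of_tendsto_nhds_of_eventually_within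
    · have : Tendsto (fun r : ℝ => r * (1 + δ)) (𝓝 0) (𝓝 (0 * (1 + δ))) :=
        (continuous_id.mul continuous_const).tendsto 0
      simpa using this.mono_left nhdsWithin_le_nhds
    · filter_upwards [self_mem_nhdsWithin] with r hr
      exact mul_pos hr h1δ
  obtain ⟨r, ⟨hrcone, hrdens⟩, hr0⟩ :=
    ((hcone.and (hmap.eventually hev2)).and self_mem_nhdsWithin).exists
  set R : ℝ := r * (1 + δ) with hRdef
  have hR0 : 0 < R := mul_pos hr0 h1δ
  set A : Set (EuclideanSpace ℝ (Fin L)) := Metric.ball (x₀ + r • y₀) (r * δ) with hAdef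
  set cB : Set (EuclideanSpace ℝ (Fin L)) := Metric.closedBall x₀ R with hcBdef
  have hAsub : A ⊆ cB := by
    intro z hz
    rw [hAdef, Metric.mem_ball] at hz
    rw [hcBdef, Metric.mem_closedBall]
    calc dist z x₀ ≤ dist z (x₀ + r • y₀) + dist (x₀ + r • y₀) x₀ := dist_triangle _ _ _
    _ ≤ r * δ + ‖r • y₀‖ := by
        apply add_le_add hz.le
        rw [dist_eq_norm, add_sub_cancel_left]
    _ = r * δ + r := by
        rw [norm_smul, Real.norm_eq_abs, abs_of_pos hr0, hy₀norm, mul_one]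
    _ = R := by rw [hRdef]; ring
  have hZA : ∀ z ∈ A, z ∉ Z := by
    intro z hz hzZ
    rw [hAdef, Metric.mem_ball] at hz
    set y : EuclideanSpace ℝ (Fin L) := r⁻¹ • (z - x₀) with hydef
    have hymem : y ∈ Metric.ball y₀ δ := by
      rw [Metric.mem_ball, dist_eq_norm]
      have : y - y₀ = r⁻¹ • (z - (x₀ + r • y₀)) := by
        rw [hydef, smul_sub, smul_sub, smul_add, smul_smul,
          inv_mul_cancel₀ hr0.ne', one_smul]
        abel
      rw [this, norm_smul, Real.norm_eq_abs, abs_of_pos (inv_pos.2 hr0)]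
      rw [dist_eq_norm] at hz
      calc r⁻¹ * ‖z - (x₀ + r • y₀)‖ < r⁻¹ * (r * δ) :=
        mul_lt_mul_of_pos_left hz (inv_pos.2 hr0)
      _ = δ := by field_simp
    have hzx : x₀ + r • y = z := by
      rw [hydef, smul_smul, mul_inv_cancel₀ hr0.ne', one_smul]
      abel
    exact hrcone y hymem (hzx ▸ hzZ.2)
  have hfr : Module.finrank ℝ (EuclideanSpace ℝ (Fin L)) = L := finrank_euclideanSpace_fin
  have hμA : volume A = ρ * volume cB := by
    rw [hAdef, hcBdef, Measure.addHaar_ball volume _ (by positivity : (0:ℝ) ≤ r * δ),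
      Measure.addHaar_closedBall volume _ hR0.le, hfr, hρdef, ← mul_assoc,
      ← ENNReal.ofReal_mul (by positivity)]
    congr 2
    rw [hRdef, ← mul_pow]
    congr 1
    field_simp
  have hcB0 : volume cB ≠ 0 := (Metric.measure_closedBall_pos volume x₀ hR0).ne'
  have hcBtop : volume cB ≠ ⊤ := measure_closedBall_lt_top.ne
  have hlower : (1 - ρ) * volume cB < volume (Z ∩ cB) := by
    rw [← ENNReal.lt_div_iff_mul_lt (Or.inl hcB0) (Or.inl hcBtop)]
    exact hrdens
  have hupper : volume (Z ∩ cB) ≤ (1 - ρ) * volume cB := by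
    have hsub : Z ∩ cB ⊆ cB \ A := fun z hz => ⟨hz.2, fun hzA => hZA z hzA hz.1⟩
    calc volume (Z ∩ cB) ≤ volume (cB \ A) := measure_mono hsub
    _ = volume cB - volume A :=
        measure_diff hAsub Metric.isOpen_ball.measurableSet.nullMeasurableSet
          measure_ball_lt_top.ne
    _ = volume cB - ρ * volume cB := by rw [hμA]
    _ = (1 - ρ) * volume cB := by
        rw [ENNReal.sub_mul (fun _ _ => hcBtop), one_mul]
  exact absurd (lt_of_lt_of_le hlower hupper) (lt_irrefl _)
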